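/- Let G be a finite simple graph, let v_1, …, v_k (k ≥ 1) be distinct vertices of G whose closed neighbourhoods all coincide, N[v_1] = ⋯ = N[v_k], and let w be a vertex of G distinct from all v_j and adjacent to no v_j. For 0 ≤ j ≤ k let G_j be the graph obtained from G by adding the edges v_1w, v_2w, …, v_jw (so G_0 = G). Then for every n ∈ ℕ the sequence (X_{G_j}^{(n)})_{j=0}^{k} is an arithmetic progression in ℚ[x_1,…,x_n], i.e. X_{G_{j+1}}^{(n)} − X_{G_j}^{(n)} = X_{G_1}^{(n)} − X_{G_0}^{(n)} for all 0 ≤ j ≤ k−1; in particular X_{G_j}^{(n)} = ((k−j)/k)·X_{G_0}^{(n)} + (j/k)·X_{G_k}^{(n)} for all 0 ≤ j ≤ k. -/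
import Mathlib


open scoped Classical
noncomputable section

/-- Words of length `d` in the positive integers. -/
abbrev NCWord (d : ℕ) := Fin d → ℕ+

/-- `M_d`: coefficient functions of homogeneous degree-`d` series in
noncommuting variables. -/
abbrev Md (d : ℕ) := NCWord d → ℚ

/-- `Y_G`, the chromatic symmetric function of a labelled graph in
noncommuting variables, as an element of `M_d`. -/
def YG {d : ℕ} (G : SimpleGraph (Fin d)) : Md d :=
  fun w => if ∀ j k : Fin d, G.Adj j k → w j ≠ w k then 1 else 0

/-- Set partitions of `{0, …, d-1}`. -/
abbrev SetPtn (d : ℕ) := Finpartition (Finset.univ : Finset (Fin d))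

/-- `j` and `k` lie in a common block of `π`. -/
def sameBlock {d : ℕ} (π : SetPtn d) (j k : Fin d) : Prop :=
  ∃ B ∈ π.parts, j ∈ B ∧ k ∈ B

/-- The elementary symmetric function `e_π` in noncommuting variables. -/
def eSP {d : ℕ} (π : SetPtn d) : Md d :=
  fun w => if ∀ j k : Fin d, j ≠ k → sameBlock π j k → w j ≠ w k then 1 else 0

/-- The block of `π` containing `a`. -/
def blockOf {d : ℕ} (π : SetPtn d) (a : Fin d) : Finset (Fin d) :=
  Finset.univ.filter fun k => sameBlock π a k

/-- The type of a set partition relative to the distinguished element `a`: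
the multiset of sizes of the blocks not containing `a` (an integer partition),
together with the size of the block containing `a`. -/
def ptype {d : ℕ} (π : SetPtn d) (a : Fin d) : Multiset ℕ × ℕ :=
  ((π.parts.erase (blockOf π a)).val.map Finset.card, (blockOf π a).card)

/-- `K_d`: the span of the differences `e_{π₁} - e_{π₂}` over pairs of set
partitions of equal type (relative to the distinguished element `a`). -/
def Ksub {d : ℕ} (a : Fin d) : Submodule ℚ (Md d) :=
  Submodule.span ℚ
    {f | ∃ π₁ π₂ : SetPtn d, ptype π₁ a = ptype π₂ a ∧ f = eSP π₁ - eSP π₂}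

/-- `(e)`-positivity of a labelled graph, with distinguished vertex `a`:
`Y_G` is congruent modulo `K_d` to a nonnegative combination of `e_π`'s. -/
def IsEPosNCAt {d : ℕ} (G : SimpleGraph (Fin d)) (a : Fin d) : Prop :=
  ∃ (s : Finset (SetPtn d)) (c : SetPtn d → ℚ),
    (∀ π, 0 ≤ c π) ∧ YG G - ∑ π ∈ s, c π • eSP π ∈ Ksub a

/-- Induction `↑ : M_d → M_{d+1}`. -/
def induct {d : ℕ} (f : Md d) : Md (d + 1) :=
  fun w => if w (Fin.last d) = w ⟨d - 1, by omega⟩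
    then f (fun t => w t.castSucc) else 0

/-- Concatenation of labelled graphs: identify the last vertex of `G` with
the first vertex of `H`. -/
def concatG {p q : ℕ} (G : SimpleGraph (Fin p)) (H : SimpleGraph (Fin q)) :
    SimpleGraph (Fin (p + q - 1)) :=
  SimpleGraph.fromRel fun a b =>
    (∃ i j : Fin p, G.Adj i j ∧ (a : ℕ) = (i : ℕ) ∧ (b : ℕ) = (j : ℕ)) ∨
    (∃ i j : Fin q, H.Adj i j ∧ (a : ℕ) = (i : ℕ) + (p - 1) ∧ (b : ℕ) = (j : ℕ) + (p - 1))

/-- The reverse graph `G^r`. -/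
def revG {d : ℕ} (G : SimpleGraph (Fin d)) : SimpleGraph (Fin d) :=
  SimpleGraph.comap (fun i : Fin d => (⟨d - 1 - (i : ℕ), by have := i.isLt; omega⟩ : Fin d)) G

/-- A labelled graph: a simple graph on vertex set `{0, …, n-1}`, `n ≥ 1`. -/
structure LGraph where
  n : ℕ
  npos : 0 < n
  G : SimpleGraph (Fin n)

/-- The last vertex of a labelled graph. -/
def LGraph.last (A : LGraph) : Fin A.n := ⟨A.n - 1, by have := A.npos; omega⟩

/-- A labelled graph is `(e)`-positive (at its last vertex). -/
def LGraph.EPosNC (A : LGraph) : Prop := IsEPosNCAt A.G A.last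

/-- Concatenation, as an operation on labelled graphs. -/
def LGraph.concat (A B : LGraph) : LGraph :=
  ⟨A.n + B.n - 1, by have := A.npos; have := B.npos; omega, concatG A.G B.G⟩

/-- Reversal, as an operation on labelled graphs. -/
def LGraph.rev (A : LGraph) : LGraph := ⟨A.n, A.npos, revG A.G⟩

/-- Appendable `(e)`-positivity: `G + H` is `(e)`-positive for every
`(e)`-positive labelled graph `G`. -/
def LGraph.Appendable (H : LGraph) : Prop :=
  ∀ A : LGraph, A.EPosNC → (A.concat H).EPosNC

/-- The chromatic symmetric polynomial of `G` in `n` commuting variables. -/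
def cspoly {V : Type} [Fintype V] [DecidableEq V] (G : SimpleGraph V) (n : ℕ) :
    MvPolynomial (Fin n) ℚ :=
  ∑ κ ∈ Finset.univ.filter (fun κ : V → Fin n => ∀ u v : V, G.Adj u v → κ u ≠ κ v),
    ∏ v : V, MvPolynomial.X (κ v)

/-- `e`-positivity of a finite graph. -/
def EPos {V : Type} [Fintype V] [DecidableEq V] (G : SimpleGraph V) : Prop :=
  ∃ c : Nat.Partition (Fintype.card V) → ℚ, (∀ p, 0 ≤ c p) ∧
    ∀ n : ℕ, cspoly G n =
      ∑ p : Nat.Partition (Fintype.card V),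
        c p • (p.parts.map fun r => MvPolynomial.esymm (Fin n) ℚ r).prod

/-- Closed neighbourhood of a vertex, as a finset. -/
def closedNbhd {d : ℕ} (G : SimpleGraph (Fin d)) (i : Fin d) : Finset (Fin d) :=
  Finset.univ.filter fun k => k = i ∨ G.Adj i k

/-- `m_i`: the largest label in the closed neighbourhood of `i`. -/
def mIdx {d : ℕ} (G : SimpleGraph (Fin d)) (i : Fin d) : Fin d :=
  (closedNbhd G i).max' ⟨i, by simp [closedNbhd]⟩

/-- `w_i`: the smallest label in the closed neighbourhood of `i`. -/
def wIdx {d : ℕ} (G : SimpleGraph (Fin d)) (i : Fin d) : Fin d :=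
  (closedNbhd G i).min' ⟨i, by simp [closedNbhd]⟩

/-- Labelled unit interval graph. -/
def IsUnitInterval {d : ℕ} (G : SimpleGraph (Fin d)) : Prop :=
  ∀ i v w j : Fin d, i ≤ v → v < w → w ≤ j → G.Adj i j → G.Adj v w

/-- An acyclic orientation of a graph, as an asymmetric relation with
irreflexive transitive closure whose symmetrization matches adjacency. -/
def IsAcyclicOrientation {V : Type} (G : SimpleGraph V) (r : V → V → Prop) : Prop :=
  (∀ a b, r a b → ¬ r b a) ∧
  (∀ a b, a ≠ b → ((r a b ∨ r b a) ↔ G.Adj a b)) ∧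
  Irreflexive (Relation.TransGen r)

/-- The set of sinks of an orientation. -/
def sinkSet {V : Type} [Fintype V] (r : V → V → Prop) : Finset V :=
  Finset.univ.filter fun x => ∀ y, ¬ r x y

/-- The labelled path `P_d`. -/
def PathG (d : ℕ) : SimpleGraph (Fin d) :=
  SimpleGraph.fromRel fun a b => (b : ℕ) = (a : ℕ) + 1

/-- The labelled cycle `C_d`. -/
def CycleG (d : ℕ) : SimpleGraph (Fin d) :=
  SimpleGraph.fromRel fun a b => (b : ℕ) = (a : ℕ) + 1 ∨ ((a : ℕ) = 0 ∧ (b : ℕ) = d - 1)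

/-- The graph obtained from `G` by adding the edges `v_1 w, …, v_j w`. -/
def addStarEdges {V : Type} (G : SimpleGraph V) {k : ℕ} (v : Fin k → V) (w : V)
    (j : ℕ) : SimpleGraph V :=
  SimpleGraph.fromRel fun a b =>
    G.Adj a b ∨ ∃ t : Fin k, (t : ℕ) < j ∧ a = v t ∧ b = w

theorem stmt0 {V : Type} [Fintype V] [DecidableEq V] (G : SimpleGraph V)
    (k : ℕ) (hk : 1 ≤ k) (v : Fin k → V) (hv : Function.Injective v)
    (w : V) (hw : ∀ t, w ≠ v t) (hwadj : ∀ t, ¬ G.Adj w (v t))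
    (hnbhd : ∀ s t : Fin k, ∀ x : V,
      (x = v s ∨ G.Adj (v s) x) ↔ (x = v t ∨ G.Adj (v t) x)) :
    (∀ n j : ℕ, j + 1 ≤ k →
      cspoly (addStarEdges G v w (j + 1)) n - cspoly (addStarEdges G v w j) n =
        cspoly (addStarEdges G v w 1) n - cspoly (addStarEdges G v w 0) n) ∧
    (∀ n j : ℕ, j ≤ k →
      cspoly (addStarEdges G v w j) n =
        (((k : ℚ) - (j : ℚ)) / (k : ℚ)) • cspoly (addStarEdges G v w 0) n +
          ((j : ℚ) / (k : ℚ)) • cspoly (addStarEdges G v w k) n) := by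
  classical
  have hkpos : 0 < k := hk
  -- the v's are pairwise adjacent
  have hvadj : ∀ s t : Fin k, s ≠ t → G.Adj (v s) (v t) := by
    intro s t hst
    rcases (hnbhd t s (v t)).mp (Or.inl rfl) with h | h
    · exact absurd (hv h) fun e => hst e.symm
    · exact h
  -- adjacency of the same vertex relative to v s and v t coincide
  have hAdjswap : ∀ (s t : Fin k) (b : V), b ≠ v s → b ≠ v t →
      (G.Adj (v s) b ↔ G.Adj (v t) b) := by
    intro s t b hbs hbt
    constructor
    · intro h1
      rcases (hnbhd s t b).mp (Or.inr h1) with h2 | h2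
      · exact absurd h2 hbt
      · exact h2
    · intro h1
      rcases (hnbhd s t b).mpr (Or.inr h1) with h2 | h2
      · exact absurd h2 hbs
      · exact h2
  -- swapping v s and v t is a graph automorphism
  have hswap : ∀ (s t : Fin k) (a b : V), G.Adj a b →
      G.Adj (Equiv.swap (v s) (v t) a) (Equiv.swap (v s) (v t) b) := by
    intro s t a b hab
    by_cases has : a = v s
    · subst has
      rw [Equiv.swap_apply_left]
      by_cases hbs : b = v s
      · exact absurd hbs.symm hab.ne
      · by_cases hbt : b = v t
        · subst hbt; rw [Equiv.swap_apply_right]; exact hab.symm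
        · rw [Equiv.swap_apply_of_ne_of_ne hbs hbt]
          exact (hAdjswap s t b hbs hbt).mp hab
    · by_cases hat : a = v t
      · subst hat
        rw [Equiv.swap_apply_right]
        by_cases hbs : b = v s
        · subst hbs; rw [Equiv.swap_apply_left]; exact hab.symm
        · by_cases hbt : b = v t
          · exact absurd hbt.symm hab.ne
          · rw [Equiv.swap_apply_of_ne_of_ne hbs hbt]
            exact (hAdjswap t s b hbt hbs).mp hab
      · rw [Equiv.swap_apply_of_ne_of_ne has hat]
        by_cases hbs : b = v s
        · subst hbs; rw [Equiv.swap_apply_left]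
          exact ((hAdjswap s t a has hat).mp hab.symm).symm
        · by_cases hbt : b = v t
          · subst hbt; rw [Equiv.swap_apply_right]
            exact ((hAdjswap t s a hat has).mp hab.symm).symm
          · rw [Equiv.swap_apply_of_ne_of_ne hbs hbt]; exact hab
  -- adjacency in the augmented graphs
  have hadj_iff : ∀ (j : ℕ) (a b : V), (addStarEdges G v w j).Adj a b ↔
      (G.Adj a b ∨ ∃ t : Fin k, (t : ℕ) < j ∧
        ((a = v t ∧ b = w) ∨ (b = v t ∧ a = w))) := by
    intro j a b
    simp only [addStarEdges, SimpleGraph.fromRel_adj]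
    constructor
    · rintro ⟨hab, h | h⟩
      · rcases h with h | ⟨t, ht, rfl, rfl⟩
        · exact Or.inl h
        · exact Or.inr ⟨t, ht, Or.inl ⟨rfl, rfl⟩⟩
      · rcases h with h | ⟨t, ht, rfl, rfl⟩
        · exact Or.inl h.symm
        · exact Or.inr ⟨t, ht, Or.inr ⟨rfl, rfl⟩⟩
    · rintro (h | ⟨t, ht, ⟨rfl, rfl⟩ | ⟨rfl, rfl⟩⟩)
      · exact ⟨h.ne, Or.inl (Or.inl h)⟩
      · exact ⟨fun hh => hw t hh.symm, Or.inl (Or.inr ⟨t, ht, rfl, rfl⟩)⟩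
      · exact ⟨hw t, Or.inr (Or.inr ⟨t, ht, rfl, rfl⟩)⟩
  -- the main formula
  have main : ∀ n j : ℕ, j ≤ k →
      cspoly (addStarEdges G v w j) n =
        cspoly (addStarEdges G v w 0) n - (j : ℚ) •
          (cspoly (addStarEdges G v w 0) n - cspoly (addStarEdges G v w 1) n) := by
    intro n j hj
    set F : (V → Fin n) → MvPolynomial (Fin n) ℚ :=
      fun κ => ∏ x : V, MvPolynomial.X (κ x) with hF
    set S : ℕ → Finset (V → Fin n) := fun j => Finset.univ.filter
      (fun κ => (∀ a b : V, G.Adj a b → κ a ≠ κ b) ∧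
        ∀ t : Fin k, (t : ℕ) < j → κ (v t) ≠ κ w) with hSdef
    set T : Fin k → Finset (V → Fin n) := fun s => Finset.univ.filter
      (fun κ => (∀ a b : V, G.Adj a b → κ a ≠ κ b) ∧ κ (v s) = κ w) with hTdef
    -- cspoly of the augmented graph as a sum over S j
    have hcs : ∀ j : ℕ, cspoly (addStarEdges G v w j) n = ∑ κ ∈ S j, F κ := by
      intro j
      unfold cspoly
      apply Finset.sum_congr
      · apply Finset.filter_congr
        intro κ _
        constructor
        · intro h
          refine ⟨fun a b hab => h a b ((hadj_iff j a b).mpr (Or.inl hab)), ?_⟩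
          intro t ht
          exact h (v t) w ((hadj_iff j (v t) w).mpr
            (Or.inr ⟨t, ht, Or.inl ⟨rfl, rfl⟩⟩))
        · rintro ⟨h1, h2⟩ a b hab
          rcases (hadj_iff j a b).mp hab with h | ⟨t, ht, ⟨rfl, rfl⟩ | ⟨rfl, rfl⟩⟩
          · exact h1 a b h
          · exact h2 t ht
          · exact fun e => h2 t ht e.symm
      · intros; rfl
    -- the T-sums are all equal
    have hmap : ∀ (s t : Fin k) (κ : V → Fin n), κ ∈ T s →
        (κ ∘ Equiv.swap (v s) (v t)) ∈ T t := by
      intro s t κ hκ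
      rw [hTdef] at hκ ⊢
      simp only [Finset.mem_filter, Finset.mem_univ, true_and] at hκ ⊢
      refine ⟨fun a b hab => hκ.1 _ _ (hswap s t a b hab), ?_⟩
      simp only [Function.comp_apply, Equiv.swap_apply_right,
        Equiv.swap_apply_of_ne_of_ne (hw s) (hw t)]
      exact hκ.2
    have hB : ∀ s t : Fin k, (∑ κ ∈ T s, F κ) = ∑ κ ∈ T t, F κ := by
      intro s t
      refine Finset.sum_nbij' (fun κ => κ ∘ Equiv.swap (v s) (v t))
        (fun κ => κ ∘ Equiv.swap (v s) (v t)) (fun κ hκ => hmap s t κ hκ)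
        (fun κ hκ => ?_) (fun κ _ => ?_) (fun κ _ => ?_) (fun κ hκ => ?_)
      · have := hmap t s κ hκ
        rwa [Equiv.swap_comm (v t) (v s)] at this
      · ext x
        simp [Function.comp, Equiv.swap_apply_self]
      · ext x
        simp [Function.comp, Equiv.swap_apply_self]
      · rw [hF]
        exact (Equiv.prod_comp (Equiv.swap (v s) (v t))
          (fun x => MvPolynomial.X (κ x))).symm
    -- the step identity
    have hstep : ∀ j : ℕ, (hj : j < k) →
        (∑ κ ∈ S j, F κ) = (∑ κ ∈ S (j + 1), F κ) + ∑ κ ∈ T ⟨j, hj⟩, F κ := by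
      intro j hjk
      have hsplit := Finset.sum_filter_add_sum_filter_not (S j)
        (fun κ => κ (v ⟨j, hjk⟩) ≠ κ w) F
      have h1 : (S j).filter (fun κ => κ (v ⟨j, hjk⟩) ≠ κ w) = S (j + 1) := by
        ext κ
        rw [hSdef]
        simp only [Finset.mem_filter, Finset.mem_univ, true_and]
        constructor
        · rintro ⟨⟨hp, hlt⟩, hne⟩
          refine ⟨hp, fun t ht => ?_⟩
          rcases Nat.lt_succ_iff_lt_or_eq.mp ht with h | h
          · exact hlt t h
          · have : t = ⟨j, hjk⟩ := Fin.ext h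
            rw [this]; exact hne
        · rintro ⟨hp, hlt⟩
          exact ⟨⟨hp, fun t ht => hlt t (Nat.lt_succ_of_lt ht)⟩,
            hlt ⟨j, hjk⟩ (Nat.lt_succ_self j)⟩
      have h2 : (S j).filter (fun κ => ¬ κ (v ⟨j, hjk⟩) ≠ κ w) = T ⟨j, hjk⟩ := by
        ext κ
        rw [hSdef, hTdef]
        simp only [Finset.mem_filter, Finset.mem_univ, true_and, not_not]
        constructor
        · rintro ⟨⟨hp, _⟩, he⟩
          exact ⟨hp, he⟩
        · rintro ⟨hp, he⟩
          refine ⟨⟨hp, fun t ht => ?_⟩, he⟩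
          have htne : t ≠ ⟨j, hjk⟩ := by
            intro e; rw [e] at ht; exact absurd ht (lt_irrefl j)
          have := hp _ _ (hvadj t ⟨j, hjk⟩ htne)
          rw [he] at this
          exact this
      rw [h1, h2] at hsplit
      exact hsplit.symm
    -- induction
    have hind : ∀ j : ℕ, j ≤ k →
        (∑ κ ∈ S j, F κ) = (∑ κ ∈ S 0, F κ) - (j : ℚ) • ∑ κ ∈ T ⟨0, hkpos⟩, F κ := by
      intro j
      induction j with
      | zero => intro _; simp
      | succ m ih =>
        intro hm
        have hmk : m < k := hm
        have e1 := hstep m hmk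
        rw [hB ⟨m, hmk⟩ ⟨0, hkpos⟩, ih (Nat.le_of_succ_le hm)] at e1
        push_cast
        rw [add_smul, one_smul, ← sub_sub, e1]
        abel
    have hB0 : (∑ κ ∈ T ⟨0, hkpos⟩, F κ) =
        (∑ κ ∈ S 0, F κ) - ∑ κ ∈ S 1, F κ := by
      have := hstep 0 hkpos
      rw [this]; ring
    rw [hcs j, hcs 0, hcs 1, hind j hj, hB0]
  -- conclude
  constructor
  · intro n j hj
    have e1 := main n (j + 1) hj
    have e2 := main n j (Nat.le_of_succ_le hj)
    have e3 := main n 1 hk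
    rw [e1, e2, e3]
    push_cast
    module
  · intro n j hj
    have e1 := main n j hj
    have e2 := main n k le_rfl
    rw [e1, e2]
    have hk0 : (k : ℚ) ≠ 0 := Nat.cast_ne_zero.mpr (by omega)
    match_scalars <;> field_simp <;> ring
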